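/- Let F be a field, ι a finite index set, z ∈ ι, and B : ι → ι → ℤ an integer matrix with B(z,z) = 0; let B̄ = μ_z(B). Let x, x̄, p⁺, p⁻, p̄⁺, p̄⁻ : ι → F take only nonzero values, and assume: (a) x̄(f) = x(f) for all f ≠ z; (b) x(z)·x̄(z) = p⁺(z)·∏_f x(f)^{[B(f,z)]₊} + p⁻(z)·∏_f x(f)^{[−B(f,z)]₊}; (c) p̄⁺(z) = p⁻(z) and p̄⁻(z) = p⁺(z); (d) for every y ≠ z, p̄⁺(y)/p̄⁻(y) = (p⁺(y)/p⁻(y))·(p⁺(z)/p⁻(z))^{[B(z,y)]₊}·p⁻(z)^{B(z,y)}. Define ŷ(e) = (p⁺(e)/p⁻(e))·∏_f x(f)^{B(f,e)} and ŷ̄(e) = (p̄⁺(e)/p̄⁻(e))·∏_f x̄(f)^{B̄(f,e)} (integer powers of nonzero field elements). Then ŷ̄(z) = ŷ(z)⁻¹, and for every f ≠ z, ŷ̄(f) = ŷ(f)·ŷ(z)^{[B(z,f)]₊}·(ŷ(z)+1)^{−B(z,f)}; in particular ŷ(z)+1 ≠ 0, since p⁻(z)·∏_f x(f)^{[−B(f,z)]₊}·(ŷ(z)+1)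 = x(z)·x̄(z) ≠ 0. Thus the quantities ŷ form a (normalized) Y-pattern: the tuple ŷ uniquely determines the mutated tuple ŷ̄. -/

import Mathlib

open Finset

/-- Matrix mutation in direction `z`. -/
def matrixMutation {ι : Type*} [DecidableEq ι] (B : ι → ι → ℤ) (z : ι) : ι → ι → ℤ :=
  fun x y =>
    if x = z ∨ y = z then -B x y
    else if 0 ≤ B x z * B z y then B x y + |B x z| * B z y
    else B x y

lemma mut_exp (a b c : ℤ) :
    (if 0 ≤ a * b then c + |a| * b else c)
      = c + max a 0 * max b 0 - max (-a) 0 * max (-b) 0 := by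
  rcases eq_or_ne a 0 with rfl | ha0
  · simp
  rcases eq_or_ne b 0 with rfl | hb0
  · simp
  rcases le_or_gt 0 a with ha | ha <;> rcases le_or_gt 0 b with hb | hb
  · rw [if_pos (mul_nonneg ha hb), abs_of_nonneg ha, max_eq_left ha, max_eq_left hb,
      max_eq_right (neg_nonpos.mpr ha), max_eq_right (neg_nonpos.mpr hb)]
    ring
  · rw [if_neg (by nlinarith [lt_of_le_of_ne ha (Ne.symm ha0)]), max_eq_left ha,
      max_eq_right hb.le, max_eq_right (neg_nonpos.mpr ha), max_eq_left (by omega)]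
    ring
  · rw [if_neg (by nlinarith [lt_of_le_of_ne hb (Ne.symm hb0)]), max_eq_right ha.le,
      max_eq_left hb, max_eq_left (by omega), max_eq_right (neg_nonpos.mpr hb)]
    ring
  · rw [if_pos (by nlinarith), abs_of_nonpos ha.le, max_eq_right ha.le, max_eq_right hb.le,
      max_eq_left (by omega), max_eq_left (by omega)]
    ring

set_option maxHeartbeats 2000000 in
/-- Proposition 5 (`pr:yhat`): if the seed `(x̄, p̄±, B̄)` is obtained from the seed
`(x, p±, B)` by a non-normalized seed mutation in direction `z`, then the quantities
`ŷ(e) = (p⁺(e)/p⁻(e))·∏_f x(f)^{B(f,e)}` satisfy the (normalized) Y-pattern mutation rule: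
`ŷ̄(z) = ŷ(z)⁻¹` and, for `f ≠ z`,
`ŷ̄(f) = ŷ(f)·ŷ(z)^{[B(z,f)]₊}·(ŷ(z)+1)^{−B(z,f)}`; in particular `ŷ(z) + 1 ≠ 0`. -/
theorem yhat_mutation {F : Type*} [Field F] {ι : Type*} [Fintype ι] [DecidableEq ι]
    (z : ι) (B : ι → ι → ℤ) (hBzz : B z z = 0)
    (B' : ι → ι → ℤ) (hB' : B' = matrixMutation B z)
    (x xb pp pm ppb pmb : ι → F)
    (hx : ∀ f, x f ≠ 0) (hxb : ∀ f, xb f ≠ 0)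
    (hpp : ∀ f, pp f ≠ 0) (hpm : ∀ f, pm f ≠ 0)
    (hppb : ∀ f, ppb f ≠ 0) (hpmb : ∀ f, pmb f ≠ 0)
    (ha : ∀ f, f ≠ z → xb f = x f)
    (hb : x z * xb z = pp z * ∏ f, x f ^ max (B f z) 0
            + pm z * ∏ f, x f ^ max (-B f z) 0)
    (hc1 : ppb z = pm z) (hc2 : pmb z = pp z)
    (hd : ∀ y, y ≠ z → ppb y / pmb y
        = (pp y / pm y) * (pp z / pm z) ^ max (B z y) 0 * pm z ^ (B z y))
    (yh yhb : ι → F)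
    (hyh : ∀ e, yh e = (pp e / pm e) * ∏ f, x f ^ (B f e))
    (hyhb : ∀ e, yhb e = (ppb e / pmb e) * ∏ f, xb f ^ (B' f e)) :
    yhb z = (yh z)⁻¹ ∧ yh z + 1 ≠ 0 ∧
      ∀ f, f ≠ z →
        yhb f = yh f * yh z ^ max (B z f) 0 * (yh z + 1) ^ (-B z f) := by
  have hprodne : ∀ (c : ι → ℤ), (∏ f, x f ^ c f) ≠ 0 := fun c =>
    Finset.prod_ne_zero_iff.mpr fun f _ => zpow_ne_zero _ (hx f)
  have hadd : ∀ (c d : ι → ℤ),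
      (∏ f, x f ^ (c f + d f)) = (∏ f, x f ^ c f) * ∏ f, x f ^ d f := fun c d => by
    rw [← Finset.prod_mul_distrib]
    exact Finset.prod_congr rfl fun f _ => zpow_add₀ (hx f) _ _
  have hmulc : ∀ (c : ι → ℤ) (m : ℤ),
      (∏ f, x f ^ (c f * m)) = (∏ f, x f ^ c f) ^ m := fun c m => by
    rw [← Finset.prod_zpow]
    exact Finset.prod_congr rfl fun f _ => zpow_mul (x f) _ _
  have hPM : (∏ f, x f ^ (B f z)) * (∏ f, x f ^ max (-B f z) 0)
      = ∏ f, x f ^ max (B f z) 0 := by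
    rw [← hadd]
    exact Finset.prod_congr rfl fun f _ => by congr 1; omega
  have hMne : (∏ f, x f ^ max (-B f z) 0) ≠ 0 := hprodne _
  have key : x z * xb z = pm z * (∏ f, x f ^ max (-B f z) 0) * (yh z + 1) := by
    rw [hyh, hb, mul_add, mul_one]
    congr 1
    rw [← hPM]
    field_simp [hpm z]
  have h1 : yh z + 1 ≠ 0 := by
    intro h
    apply mul_ne_zero (hx z) (hxb z)
    rw [key, h, mul_zero]
  have hplus : yh z + 1
      = x z * xb z * (pm z * ∏ f, x f ^ max (-B f z) 0)⁻¹ := by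
    rw [key, mul_comm (pm z * ∏ f, x f ^ max (-B f z) 0) (yh z + 1),
      mul_inv_cancel_right₀ (mul_ne_zero (hpm z) hMne)]
  refine ⟨?_, h1, ?_⟩
  · -- yhb z = (yh z)⁻¹
    have hBz : ∀ f, B' f z = -(B f z) := fun f => by simp [hB', matrixMutation]
    rw [hyhb, hc1, hc2, hyh]
    have hx' : (∏ f, xb f ^ (B' f z)) = (∏ f, x f ^ (B f z))⁻¹ := by
      rw [← Finset.prod_inv_distrib]
      refine Finset.prod_congr rfl fun f _ => ?_
      rw [hBz f, zpow_neg]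
      by_cases hf : f = z
      · subst hf; rw [hBzz]; simp
      · rw [ha f hf]
    rw [hx', mul_inv, inv_div]
  · -- main case
    intro y hy
    have hB'zy : B' z y = -(B z y) := by simp [hB', matrixMutation]
    have hB'e : ∀ e, B' e y = B e y + max (B e z) 0 * max (B z y) 0
        + max (-B e z) 0 * (-(max (-B z y) 0)) + (if e = z then -2 * B z y else 0) := by
      intro e
      by_cases he : e = z
      · subst he
        rw [hB'zy, hBzz]
        simp
        omega
      · rw [hB']
        simp only [matrixMutation]
        rw [if_neg (by simp [he, hy]), mut_exp, if_neg he]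
        ring
    have step1 : (∏ f, xb f ^ (B' f y))
        = (xb z * (x z)⁻¹) ^ (-(B z y)) * ∏ e, x e ^ (B' e y) := by
      have hpt : ∀ e, xb e ^ (B' e y)
          = x e ^ (B' e y) * (if e = z then (xb z * (x z)⁻¹) ^ (-(B z y)) else 1) := by
        intro e
        by_cases he : e = z
        · rw [if_pos he, he, hB'zy, ← mul_zpow]
          congr 1
          rw [mul_comm (xb z) (x z)⁻¹, mul_inv_cancel_left₀ (hx z)]
        · rw [ha e he, if_neg he, mul_one]
      rw [Finset.prod_congr rfl fun e _ => hpt e, Finset.prod_mul_distrib,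
        Finset.prod_ite_eq' univ z (fun _ => (xb z * (x z)⁻¹) ^ (-(B z y))),
        if_pos (Finset.mem_univ z), mul_comm]
    have hite : (∏ e, x e ^ (if e = z then -2 * B z y else 0 : ℤ))
        = x z ^ (-(B z y)) * x z ^ (-(B z y)) := by
      have hpt : ∀ e, x e ^ (if e = z then -2 * B z y else 0 : ℤ)
          = (if e = z then x e ^ (-2 * B z y) else 1) := by
        intro e; by_cases he : e = z <;> simp [he]
      rw [Finset.prod_congr rfl fun e _ => hpt e,
        Finset.prod_ite_eq' univ z (fun e => x e ^ (-2 * B z y)),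
        if_pos (Finset.mem_univ z),
        show (-2 * B z y) = -(B z y) + -(B z y) by ring, zpow_add₀ (hx z)]
    have step2 : (∏ e, x e ^ (B' e y))
        = (∏ e, x e ^ (B e y)) * (∏ f, x f ^ max (B f z) 0) ^ max (B z y) 0
          * ((∏ f, x f ^ max (-B f z) 0) ^ (-(max (-B z y) 0)))
          * (x z ^ (-(B z y)) * x z ^ (-(B z y))) := by
      rw [Finset.prod_congr rfl fun e _ => by rw [hB'e e]]
      rw [hadd, hadd, hadd, hmulc, hmulc, hite]
    rw [hyhb, hd y hy, step1, step2, hplus, hyh y, hyh z]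
    rw [← hPM, show (-(max (-B z y) 0)) = -(max (B z y) 0 - B z y) by omega]
    have hq : pp z / pm z ≠ 0 := div_ne_zero (hpp z) (hpm z)
    have hu : pm z ≠ 0 := hpm z
    have hX : x z ≠ 0 := hx z
    have hXb : xb z ≠ 0 := hxb z
    have hTz : (∏ f, x f ^ (B f z)) ≠ 0 := hprodne _
    have hXn : x z ^ (B z y) ≠ 0 := zpow_ne_zero _ hX
    have hXbn : xb z ^ (B z y) ≠ 0 := zpow_ne_zero _ hXb
    have hMg : (∏ f, x f ^ max (-B f z) 0) ^ max (B z y) 0 ≠ 0 := zpow_ne_zero _ hMne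
    have hpmy : pm y ≠ 0 := hpm y
    have hppy : pp y ≠ 0 := hpp y
    have hpmzg : pm z ^ max (B z y) 0 ≠ 0 := zpow_ne_zero _ hu
    have hppzg : pp z ^ max (B z y) 0 ≠ 0 := zpow_ne_zero _ (hpp z)
    have hTzg : (∏ f, x f ^ (B f z)) ^ max (B z y) 0 ≠ 0 := zpow_ne_zero _ hTz
    have hMn : (∏ f, x f ^ max (-B f z) 0) ^ (B z y) ≠ 0 := zpow_ne_zero _ hMne
    have hpmzn : pm z ^ (B z y) ≠ 0 := zpow_ne_zero _ hu
    simp only [mul_zpow, zpow_neg, mul_inv, inv_inv, zpow_sub₀ hMne, div_eq_mul_inv]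
    field_simp
    simp only [one_div, inv_zpow]
    field_simp
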